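/- Let ρ(x) = (24/(πe)) sin(πx) x^x (1−x)^{1−x} for x ∈ (0,1). Then ρ satisfies, for all x ∈ (0,1), the second-order linear ordinary differential equation ρ''(x) + 4·atanh(1−2x)·ρ'(x) + [ π² − 1/(x(1−x)) + 4·atanh(1−2x)² ]·ρ(x) = 0. -/

import Mathlib

/-- The inverse hyperbolic tangent, `atanh z = (1/2)·log((1+z)/(1-z))`. -/
noncomputable def atanh (z : ℝ) : ℝ := (1 / 2) * Real.log ((1 + z) / (1 - z))

/-- The derangetropy of the uniform distribution on `(0,1)`:
`ρ(x) = (24/(πe))·sin(πx)·x^x·(1-x)^(1-x)`. -/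
noncomputable def rhoU (x : ℝ) : ℝ :=
  24 / (Real.pi * Real.exp 1) * Real.sin (Real.pi * x) * x ^ x * (1 - x) ^ (1 - x)

noncomputable def gAux (x : ℝ) : ℝ := x * Real.log x + (1 - x) * Real.log (1 - x)

noncomputable def FAux (x : ℝ) : ℝ :=
  24 / (Real.pi * Real.exp 1) * (Real.sin (Real.pi * x) * Real.exp (gAux x))

noncomputable def F1 (x : ℝ) : ℝ :=
  24 / (Real.pi * Real.exp 1) * (Real.exp (gAux x) *
    (Real.pi * Real.cos (Real.pi * x) +
      Real.sin (Real.pi * x) * (Real.log x - Real.log (1 - x))))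

noncomputable def F2 (x : ℝ) : ℝ :=
  24 / (Real.pi * Real.exp 1) * (Real.exp (gAux x) *
    ((Real.log x - Real.log (1 - x)) *
      (Real.pi * Real.cos (Real.pi * x) +
        Real.sin (Real.pi * x) * (Real.log x - Real.log (1 - x))) +
     (-(Real.pi ^ 2) * Real.sin (Real.pi * x) +
       Real.pi * Real.cos (Real.pi * x) * (Real.log x - Real.log (1 - x)) +
       Real.sin (Real.pi * x) * (1 / x + 1 / (1 - x)))))

lemma hasDerivAt_gAux {x : ℝ} (hx : x ∈ Set.Ioo (0:ℝ) 1) :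
    HasDerivAt gAux (Real.log x - Real.log (1 - x)) x := by
  obtain ⟨h0, h1⟩ := hx
  have hx0 : x ≠ 0 := ne_of_gt h0
  have hx1 : (1 : ℝ) - x ≠ 0 := by linarith
  have h1d : HasDerivAt (fun x : ℝ => x * Real.log x) (Real.log x + 1) x := by
    have := (hasDerivAt_id x).mul (Real.hasDerivAt_log hx0)
    refine this.congr_deriv ?_
    field_simp
    simp only [id_eq]; ring
  have h2d : HasDerivAt (fun x : ℝ => (1 - x) * Real.log (1 - x))
      (-Real.log (1 - x) - 1) x := by
    have hu : HasDerivAt (fun x : ℝ => 1 - x) (-1) x := by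
      exact (hasDerivAt_id x).const_sub 1
    have hl : HasDerivAt (fun x : ℝ => Real.log (1 - x)) (-1 / (1 - x)) x := by
      have := (Real.hasDerivAt_log hx1).comp x hu
      refine this.congr_deriv ?_; ring
    have := hu.mul hl
    refine this.congr_deriv ?_
    field_simp
    ring
  have := h1d.add h2d
  refine this.congr_deriv ?_; ring

lemma hasDerivAt_FAux {x : ℝ} (hx : x ∈ Set.Ioo (0:ℝ) 1) :
    HasDerivAt FAux (F1 x) x := by
  have hs : HasDerivAt (fun x : ℝ => Real.sin (Real.pi * x))
      (Real.cos (Real.pi * x) * Real.pi) x := by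
    have hmul : HasDerivAt (fun x : ℝ => Real.pi * x) Real.pi x := by
      simpa using (hasDerivAt_id x).const_mul Real.pi
    exact (Real.hasDerivAt_sin (Real.pi * x)).comp x hmul
  have he : HasDerivAt (fun x : ℝ => Real.exp (gAux x))
      (Real.exp (gAux x) * (Real.log x - Real.log (1 - x))) x := by
    have := (Real.hasDerivAt_exp (gAux x)).comp x (hasDerivAt_gAux hx)
    exact this
  have := ((hs.mul he).const_mul (24 / (Real.pi * Real.exp 1)))
  refine this.congr_deriv ?_
  unfold F1
  ring

lemma hasDerivAt_F1 {x : ℝ} (hx : x ∈ Set.Ioo (0:ℝ) 1) :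
    HasDerivAt F1 (F2 x) x := by
  obtain ⟨h0, h1⟩ := hx
  have hx0 : x ≠ 0 := ne_of_gt h0
  have hx1 : (1 : ℝ) - x ≠ 0 := by linarith
  have hs : HasDerivAt (fun x : ℝ => Real.sin (Real.pi * x))
      (Real.cos (Real.pi * x) * Real.pi) x := by
    have hmul : HasDerivAt (fun x : ℝ => Real.pi * x) Real.pi x := by
      simpa using (hasDerivAt_id x).const_mul Real.pi
    exact (Real.hasDerivAt_sin (Real.pi * x)).comp x hmul
  have hc : HasDerivAt (fun x : ℝ => Real.cos (Real.pi * x))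
      (-Real.sin (Real.pi * x) * Real.pi) x := by
    have hmul : HasDerivAt (fun x : ℝ => Real.pi * x) Real.pi x := by
      simpa using (hasDerivAt_id x).const_mul Real.pi
    exact (Real.hasDerivAt_cos (Real.pi * x)).comp x hmul
  have he : HasDerivAt (fun x : ℝ => Real.exp (gAux x))
      (Real.exp (gAux x) * (Real.log x - Real.log (1 - x))) x := by
    have := (Real.hasDerivAt_exp (gAux x)).comp x (hasDerivAt_gAux ⟨h0, h1⟩)
    exact this
  have hL : HasDerivAt (fun x : ℝ => Real.log x - Real.log (1 - x))
      (1 / x + 1 / (1 - x)) x := by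
    have hl1 := Real.hasDerivAt_log hx0
    have hu : HasDerivAt (fun x : ℝ => 1 - x) (-1) x := by
      exact (hasDerivAt_id x).const_sub 1
    have hl2 : HasDerivAt (fun x : ℝ => Real.log (1 - x)) (-1 / (1 - x)) x := by
      have := (Real.hasDerivAt_log hx1).comp x hu
      refine this.congr_deriv ?_; ring
    have := hl1.sub hl2
    refine this.congr_deriv ?_
    field_simp
    ring
  have hinner : HasDerivAt (fun x : ℝ =>
      Real.pi * Real.cos (Real.pi * x) +
        Real.sin (Real.pi * x) * (Real.log x - Real.log (1 - x)))
      (Real.pi * (-Real.sin (Real.pi * x) * Real.pi) +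
        (Real.cos (Real.pi * x) * Real.pi * (Real.log x - Real.log (1 - x)) +
          Real.sin (Real.pi * x) * (1 / x + 1 / (1 - x)))) x :=
    (hc.const_mul Real.pi).add (hs.mul hL)
  have := (he.mul hinner).const_mul (24 / (Real.pi * Real.exp 1))
  refine this.congr_deriv ?_
  unfold F2
  ring

lemma rhoU_eq_FAux {x : ℝ} (hx : x ∈ Set.Ioo (0:ℝ) 1) : rhoU x = FAux x := by
  obtain ⟨h0, h1⟩ := hx
  have hx1 : (0:ℝ) < 1 - x := by linarith
  unfold rhoU FAux gAux
  rw [Real.rpow_def_of_pos h0, Real.rpow_def_of_pos hx1, Real.exp_add]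
  ring

lemma atanh_eq {x : ℝ} (hx : x ∈ Set.Ioo (0:ℝ) 1) :
    atanh (1 - 2 * x) = (1 / 2) * (Real.log (1 - x) - Real.log x) := by
  obtain ⟨h0, h1⟩ := hx
  have hx1 : (0:ℝ) < 1 - x := by linarith
  unfold atanh
  have h2 : (1 + (1 - 2 * x)) / (1 - (1 - 2 * x)) = (1 - x) / x := by
    field_simp; ring
  rw [h2, Real.log_div (ne_of_gt hx1) (ne_of_gt h0)]

/-- On `(0,1)`, the uniform derangetropy satisfies the second-order linear ODE
`ρ'' + 4·atanh(1-2x)·ρ' + (π² - 1/(x(1-x)) + 4·atanh(1-2x)²)·ρ = 0`. -/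
theorem rhoU_ode :
    ∀ x ∈ Set.Ioo (0:ℝ) 1,
      deriv (deriv rhoU) x + 4 * atanh (1 - 2 * x) * deriv rhoU x +
        (Real.pi ^ 2 - 1 / (x * (1 - x)) + 4 * atanh (1 - 2 * x) ^ 2) * rhoU x = 0 := by
  intro x hx
  have hmem : Set.Ioo (0:ℝ) 1 ∈ nhds x := isOpen_Ioo.mem_nhds hx
  have heq : rhoU =ᶠ[nhds x] FAux :=
    Filter.eventuallyEq_of_mem hmem (fun y hy => rhoU_eq_FAux hy)
  have hF1 : deriv FAux =ᶠ[nhds x] F1 :=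
    Filter.eventuallyEq_of_mem hmem (fun y hy => (hasDerivAt_FAux hy).deriv)
  have hd1 : deriv rhoU x = F1 x := by
    rw [heq.deriv_eq, (hasDerivAt_FAux hx).deriv]
  have hd2 : deriv (deriv rhoU) x = F2 x := by
    have h1 : deriv (deriv rhoU) x = deriv (deriv FAux) x := (heq.deriv).deriv_eq
    rw [h1, hF1.deriv_eq, (hasDerivAt_F1 hx).deriv]
  obtain ⟨h0, h1⟩ := hx
  have hx0 : x ≠ 0 := ne_of_gt h0
  have hx1 : (1:ℝ) - x ≠ 0 := by linarith
  rw [hd1, hd2, rhoU_eq_FAux ⟨h0, h1⟩, atanh_eq ⟨h0, h1⟩]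
  unfold F1 F2 FAux
  have hxx : 1 / (x * (1 - x)) = 1 / x + 1 / (1 - x) := by field_simp; ring
  rw [hxx]
  ring
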